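/- Let A, C be densely defined closed operators on H, K, B ∈ B(K,H), D ∈ B(H,K). If X ∈ B(H,K) is a weak solution of the Riccati equation XA - CX + XBX = D (i.e., ⟨XAf,g⟩ - ⟨Xf,C*g⟩ + ⟨XBXf,g⟩ = ⟨Df,g⟩ for all f ∈ Dom(A), g ∈ Dom(C*)), then X is a strong solution: X maps Dom(A) into Dom(C) and XAf - CXf + XBXf = Df for all f ∈ Dom(A). -/

import Mathlib

open Set Complex Filter
open scoped InnerProductSpace Topology Classical

noncomputable section

variable {H K : Type*}
  [NormedAddCommGroup H] [InnerProductSpace ℂ H] [CompleteSpace H]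
  [NormedAddCommGroup K] [InnerProductSpace ℂ K] [CompleteSpace K]

/-- A projection-valued (spectral) measure on the Borel subsets of `ℂ`,
acting on the Hilbert space `K`. -/
structure SpectralMeasure (K : Type*) [NormedAddCommGroup K] [InnerProductSpace ℂ K]
    [CompleteSpace K] where
  proj : Set ℂ → K →L[ℂ] K
  selfAdjoint : ∀ {Ω : Set ℂ}, MeasurableSet Ω → IsSelfAdjoint (proj Ω)
  mul_inter : ∀ {Ω Ω' : Set ℂ}, MeasurableSet Ω → MeasurableSet Ω' →
    proj (Ω ∩ Ω') = (proj Ω).comp (proj Ω')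
  add_union : ∀ {Ω Ω' : Set ℂ}, MeasurableSet Ω → MeasurableSet Ω' → Disjoint Ω Ω' →
    proj (Ω ∪ Ω') = proj Ω + proj Ω'
  proj_univ : proj Set.univ = 1

/-- The spectral function `Ê(λ,μ) = E({x+iy : x < λ, y < μ})`. -/
def SpectralMeasure.hatE (E : SpectralMeasure K) (l m : ℝ) : K →L[ℂ] K :=
  E.proj {z : ℂ | z.re < l ∧ z.im < m}

/-- The half-open rectangle `[l,l') × i[m,m')` in `ℂ`. -/
def rectC (l l' m m' : ℝ) : Set ℂ :=
  {z : ℂ | l ≤ z.re ∧ z.re < l' ∧ m ≤ z.im ∧ z.im < m'}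

/-- A tagged partition of the half-open interval `[a,b)` into half-open subintervals,
with a sample point (tag) in each subinterval. -/
structure TaggedPartition (a b : ℝ) where
  n : ℕ
  npos : 0 < n
  pts : ℕ → ℝ
  tags : ℕ → ℝ
  mono : ∀ i < n, pts i < pts (i + 1)
  first : pts 0 = a
  last : pts n = b
  tag_mem : ∀ i < n, pts i ≤ tags i ∧ tags i < pts (i + 1)

/-- The mesh (maximal subinterval length) of a tagged partition. -/
def TaggedPartition.mesh {a b : ℝ} (P : TaggedPartition a b) : ℝ :=
  sSup {r : ℝ | ∃ i < P.n, r = P.pts (i + 1) - P.pts i}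

/-- The Riemann–Stieltjes sum `Σ_j Σ_k F(ξ_j,ζ_k) E(δ_j × ω_k)` for the right integral
`∫ F dE` over the rectangle `[a,b) × [c,d)`. -/
def rightSum (E : SpectralMeasure K) (F : ℝ → ℝ → (K →L[ℂ] H))
    {a b c d : ℝ} (P : TaggedPartition a b) (Q : TaggedPartition c d) : K →L[ℂ] H :=
  ∑ j ∈ Finset.range P.n, ∑ k ∈ Finset.range Q.n,
    (F (P.tags j) (Q.tags k)).comp
      (E.proj (rectC (P.pts j) (P.pts (j + 1)) (Q.pts k) (Q.pts (k + 1))))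

/-- The Riemann–Stieltjes sum `Σ_j Σ_k E(δ_j × ω_k) G(ξ_j,ζ_k)` for the left integral
`∫ dE G` over the rectangle `[a,b) × [c,d)`. -/
def leftSum (E : SpectralMeasure K) (G : ℝ → ℝ → (H →L[ℂ] K))
    {a b c d : ℝ} (P : TaggedPartition a b) (Q : TaggedPartition c d) : H →L[ℂ] K :=
  ∑ j ∈ Finset.range P.n, ∑ k ∈ Finset.range Q.n,
    (E.proj (rectC (P.pts j) (P.pts (j + 1)) (Q.pts k) (Q.pts (k + 1)))).comp
      (G (P.tags j) (Q.tags k))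

/-- `F` is right-integrable w.r.t. `dE` on `[a,b) × [c,d)` in the uniform operator
topology, with integral `J`. -/
def HasRightIntegralUnif (E : SpectralMeasure K) (F : ℝ → ℝ → (K →L[ℂ] H))
    (a b c d : ℝ) (J : K →L[ℂ] H) : Prop :=
  ∀ ε > 0, ∃ δ > 0, ∀ (P : TaggedPartition a b) (Q : TaggedPartition c d),
    P.mesh < δ → Q.mesh < δ → ‖rightSum E F P Q - J‖ < ε

/-- `F` is right-integrable in the strong operator topology. -/
def HasRightIntegralStrong (E : SpectralMeasure K) (F : ℝ → ℝ → (K →L[ℂ] H))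
    (a b c d : ℝ) (J : K →L[ℂ] H) : Prop :=
  ∀ x : K, ∀ ε > 0, ∃ δ > 0, ∀ (P : TaggedPartition a b) (Q : TaggedPartition c d),
    P.mesh < δ → Q.mesh < δ → ‖rightSum E F P Q x - J x‖ < ε

/-- `F` is right-integrable in the weak operator topology. -/
def HasRightIntegralWeak (E : SpectralMeasure K) (F : ℝ → ℝ → (K →L[ℂ] H))
    (a b c d : ℝ) (J : K →L[ℂ] H) : Prop :=
  ∀ (x : K) (y : H), ∀ ε > 0, ∃ δ > 0, ∀ (P : TaggedPartition a b) (Q : TaggedPartition c d),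
    P.mesh < δ → Q.mesh < δ → ‖⟪y, rightSum E F P Q x - J x⟫_ℂ‖ < ε

/-- `G` is left-integrable w.r.t. `dE` on `[a,b) × [c,d)` in the uniform operator
topology, with integral `J`. -/
def HasLeftIntegralUnif (E : SpectralMeasure K) (G : ℝ → ℝ → (H →L[ℂ] K))
    (a b c d : ℝ) (J : H →L[ℂ] K) : Prop :=
  ∀ ε > 0, ∃ δ > 0, ∀ (P : TaggedPartition a b) (Q : TaggedPartition c d),
    P.mesh < δ → Q.mesh < δ → ‖leftSum E G P Q - J‖ < ε

/-- `G` is left-integrable in the strong operator topology. -/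
def HasLeftIntegralStrong (E : SpectralMeasure K) (G : ℝ → ℝ → (H →L[ℂ] K))
    (a b c d : ℝ) (J : H →L[ℂ] K) : Prop :=
  ∀ x : H, ∀ ε > 0, ∃ δ > 0, ∀ (P : TaggedPartition a b) (Q : TaggedPartition c d),
    P.mesh < δ → Q.mesh < δ → ‖leftSum E G P Q x - J x‖ < ε

/-- `G` is left-integrable in the weak operator topology. -/
def HasLeftIntegralWeak (E : SpectralMeasure K) (G : ℝ → ℝ → (H →L[ℂ] K))
    (a b c d : ℝ) (J : H →L[ℂ] K) : Prop :=
  ∀ (x : H) (y : K), ∀ ε > 0, ∃ δ > 0, ∀ (P : TaggedPartition a b) (Q : TaggedPartition c d),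
    P.mesh < δ → Q.mesh < δ → ‖⟪y, leftSum E G P Q x - J x⟫_ℂ‖ < ε

/-- `E` is the spectral measure of the (possibly unbounded) normal operator `C`:
on the range of any spectral projection of a finite rectangle, `C` acts as the
operator Stieltjes integral `∫ z dE(z)`. -/
def SpectralMeasure.Represents (E : SpectralMeasure K) (C : K →ₗ.[ℂ] K) : Prop :=
  ∀ a b c d : ℝ, a < b → c < d → ∀ T : K →L[ℂ] K,
    HasLeftIntegralUnif E (fun l m => ((l : ℂ) + (m : ℂ) * Complex.I) • (1 : K →L[ℂ] K))
      a b c d T →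
    ∀ x : K, ∃ h : E.proj (rectC a b c d) x ∈ C.domain,
      C ⟨E.proj (rectC a b c d) x, h⟩ = T x

/-- The support of a spectral measure; for the spectral measure of a normal
operator `C` this is `spec(C)`. -/
def specSupp (E : SpectralMeasure K) : Set ℂ :=
  {z : ℂ | ∀ ε > 0, E.proj (Metric.ball z ε) ≠ 0}

/-- The set of finite sums `Σ_k ‖Y* E(Ω_k) Y‖` over finite systems of mutually
disjoint Borel subsets of `ℂ`. -/
def EnormSet (E : SpectralMeasure K) (Y : H →L[ℂ] K) : Set ℝ :=
  {r : ℝ | ∃ (n : ℕ) (Ω : ℕ → Set ℂ), (∀ i, MeasurableSet (Ω i)) ∧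
    (∀ i < n, ∀ j < n, i ≠ j → Disjoint (Ω i) (Ω j)) ∧
    r = ∑ i ∈ Finset.range n,
      ‖(ContinuousLinearMap.adjoint Y).comp ((E.proj (Ω i)).comp Y)‖}

/-- The norm `‖Y‖_E` of `Y` with respect to the spectral measure `E`. -/
def Enorm (E : SpectralMeasure K) (Y : H →L[ℂ] K) : ℝ :=
  Real.sqrt (sSup (EnormSet E Y))

/-- `R` is the (bounded, everywhere defined) resolvent `(A - ζ)⁻¹` of the possibly
unbounded operator `A` at the point `ζ`. -/
def IsResolventAt (A : H →ₗ.[ℂ] H) (ζ : ℂ) (R : H →L[ℂ] H) : Prop :=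
  ∃ hmem : ∀ x : H, R x ∈ A.domain,
    (∀ x : H, A ⟨R x, hmem x⟩ - ζ • R x = x) ∧
    (∀ f : A.domain, R (A f - ζ • (f : H)) = f)

/-- The resolvent set of a possibly unbounded operator. -/
def pmResolventSet (A : H →ₗ.[ℂ] H) : Set ℂ := {ζ : ℂ | ∃ R, IsResolventAt A ζ R}

/-- The spectrum of a possibly unbounded operator. -/
def pmSpectrum (A : H →ₗ.[ℂ] H) : Set ℂ := (pmResolventSet A)ᶜ

/-- The numerical range `W(A) = {⟨Ax,x⟩ : x ∈ Dom(A), ‖x‖ = 1}`. -/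
def numRange (A : H →ₗ.[ℂ] H) : Set ℂ :=
  {z : ℂ | ∃ f : A.domain, ‖(f : H)‖ = 1 ∧ z = ⟪(f : H), A f⟫_ℂ}

/-- `X` is a weak solution of the Sylvester equation `XA - CX = D`. -/
def IsWeakSolutionSylvester (A : H →ₗ.[ℂ] H) (C : K →ₗ.[ℂ] K) (D X : H →L[ℂ] K) : Prop :=
  ∀ (f : A.domain) (g : C.adjoint.domain),
    ⟪(g : K), X (A f)⟫_ℂ - ⟪C.adjoint g, X (f : H)⟫_ℂ = ⟪(g : K), D (f : H)⟫_ℂ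

/-- `X` is a strong solution of the Sylvester equation `XA - CX = D`. -/
def IsStrongSolutionSylvester (A : H →ₗ.[ℂ] H) (C : K →ₗ.[ℂ] K) (D X : H →L[ℂ] K) : Prop :=
  ∀ f : A.domain, ∃ h : X (f : H) ∈ C.domain,
    X (A f) - C ⟨X (f : H), h⟩ = D (f : H)

/-- `X` is a weak solution of the Riccati equation `XA - CX + XBX = D`. -/
def IsWeakSolutionRiccati (A : H →ₗ.[ℂ] H) (C : K →ₗ.[ℂ] K) (B : K →L[ℂ] H)
    (D X : H →L[ℂ] K) : Prop :=
  ∀ (f : A.domain) (g : C.adjoint.domain),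
    ⟪(g : K), X (A f)⟫_ℂ - ⟪C.adjoint g, X (f : H)⟫_ℂ
      + ⟪(g : K), X (B (X (f : H)))⟫_ℂ = ⟪(g : K), D (f : H)⟫_ℂ

/-- `X` is a strong solution of the Riccati equation `XA - CX + XBX = D`. -/
def IsStrongSolutionRiccati (A : H →ₗ.[ℂ] H) (C : K →ₗ.[ℂ] K) (B : K →L[ℂ] H)
    (D X : H →L[ℂ] K) : Prop :=
  ∀ f : A.domain, ∃ h : X (f : H) ∈ C.domain,
    X (A f) - C ⟨X (f : H), h⟩ + X (B (X (f : H))) = D (f : H)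

/-- The Riemann–Stieltjes sum for the left integral `∫_{spec(C) ∩ Ω} dE(ζ) G(ζ)`:
only partition rectangles meeting the spectrum contribute, with tags `tag j k`
chosen per rectangle. -/
def specLeftSum (E : SpectralMeasure K) (G : ℂ → (H →L[ℂ] K))
    {a b c d : ℝ} (P : TaggedPartition a b) (Q : TaggedPartition c d)
    (tag : ℕ → ℕ → ℂ) : H →L[ℂ] K :=
  ∑ j ∈ Finset.range P.n, ∑ k ∈ Finset.range Q.n,
    if (rectC (P.pts j) (P.pts (j + 1)) (Q.pts k) (Q.pts (k + 1)) ∩ specSupp E).Nonempty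
    then (E.proj (rectC (P.pts j) (P.pts (j + 1)) (Q.pts k) (Q.pts (k + 1)))).comp
      (G (tag j k))
    else 0

/-- Admissible tags for a spectral Riemann–Stieltjes sum: whenever a partition
rectangle meets the spectrum, the tag is taken in the intersection. -/
def ValidTags (E : SpectralMeasure K) {a b c d : ℝ}
    (P : TaggedPartition a b) (Q : TaggedPartition c d) (tag : ℕ → ℕ → ℂ) : Prop :=
  ∀ j < P.n, ∀ k < Q.n,
    (rectC (P.pts j) (P.pts (j + 1)) (Q.pts k) (Q.pts (k + 1)) ∩ specSupp E).Nonempty →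
    tag j k ∈ rectC (P.pts j) (P.pts (j + 1)) (Q.pts k) (Q.pts (k + 1)) ∩ specSupp E

/-- Convergence of `∫_{spec(C) ∩ ([a,b)×i[c,d))} dE(ζ) G(ζ)` in the strong operator
topology. -/
def HasSpecLeftIntegralStrong (E : SpectralMeasure K) (G : ℂ → (H →L[ℂ] K))
    (a b c d : ℝ) (J : H →L[ℂ] K) : Prop :=
  ∀ x : H, ∀ ε > 0, ∃ δ > 0, ∀ (P : TaggedPartition a b) (Q : TaggedPartition c d)
    (tag : ℕ → ℕ → ℂ), ValidTags E P Q tag → P.mesh < δ → Q.mesh < δ →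
    ‖specLeftSum E G P Q tag x - J x‖ < ε

/-- Convergence of `∫_{spec(C) ∩ ([a,b)×i[c,d))} dE(ζ) G(ζ)` in the uniform operator
topology. -/
def HasSpecLeftIntegralUnif (E : SpectralMeasure K) (G : ℂ → (H →L[ℂ] K))
    (a b c d : ℝ) (J : H →L[ℂ] K) : Prop :=
  ∀ ε > 0, ∃ δ > 0, ∀ (P : TaggedPartition a b) (Q : TaggedPartition c d)
    (tag : ℕ → ℕ → ℂ), ValidTags E P Q tag → P.mesh < δ → Q.mesh < δ →
    ‖specLeftSum E G P Q tag - J‖ < ε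

/-- The improper integral `∫_{spec(C)} dE(ζ) G(ζ)` in the strong operator topology:
the strong limit, over exhausting finite rectangles, of the integrals over
`spec(C) ∩ ([a,b) × i[c,d))`. -/
def HasImproperSpecLeftIntegralStrong (E : SpectralMeasure K) (G : ℂ → (H →L[ℂ] K))
    (J : H →L[ℂ] K) : Prop :=
  ∃ Jr : ℝ → ℝ → ℝ → ℝ → (H →L[ℂ] K),
    (∀ a b c d : ℝ, a < b → c < d → HasSpecLeftIntegralStrong E G a b c d (Jr a b c d)) ∧
    ∀ x : H, ∀ ε > 0, ∃ R : ℝ, ∀ a b c d : ℝ, a ≤ -R → R ≤ b → c ≤ -R → R ≤ d →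
      ‖Jr a b c d x - J x‖ < ε

/-- The improper integral `∫_{spec(C)} dE(ζ) G(ζ)` in the uniform operator topology. -/
def HasImproperSpecLeftIntegralUnif (E : SpectralMeasure K) (G : ℂ → (H →L[ℂ] K))
    (J : H →L[ℂ] K) : Prop :=
  ∃ Jr : ℝ → ℝ → ℝ → ℝ → (H →L[ℂ] K),
    (∀ a b c d : ℝ, a < b → c < d → HasSpecLeftIntegralUnif E G a b c d (Jr a b c d)) ∧
    ∀ ε > 0, ∃ R : ℝ, ∀ a b c d : ℝ, a ≤ -R → R ≤ b → c ≤ -R → R ≤ d →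
      ‖Jr a b c d - J‖ < ε

/-- The improper left integral `∫_{ℝ²} dE G` (uniform operator topology) as a limit
over exhausting finite rectangles. -/
def HasImproperLeftIntegralUnif (E : SpectralMeasure K) (G : ℝ → ℝ → (H →L[ℂ] K))
    (J : H →L[ℂ] K) : Prop :=
  ∃ Jr : ℝ → ℝ → ℝ → ℝ → (H →L[ℂ] K),
    (∀ a b c d : ℝ, a < b → c < d → HasLeftIntegralUnif E G a b c d (Jr a b c d)) ∧
    ∀ ε > 0, ∃ R : ℝ, ∀ a b c d : ℝ, a ≤ -R → R ≤ b → c ≤ -R → R ≤ d →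
      ‖Jr a b c d - J‖ < ε

/-- any weak solution of the Riccati equation `XA - CX + XBX = D`
(for densely defined closed `A`, `C`, bounded `B`, `D`) is a strong solution. -/
theorem weak_implies_strong_riccati (A : H →ₗ.[ℂ] H) (C : K →ₗ.[ℂ] K)
    (hAd : Dense (A.domain : Set H)) (hAc : A.IsClosed)
    (hCd : Dense (C.domain : Set K)) (hCc : C.IsClosed)
    (B : K →L[ℂ] H) (D X : H →L[ℂ] K) (hw : IsWeakSolutionRiccati A C B D X) :
    IsStrongSolutionRiccati A C B D X := by
  intro f
  set w : K := X (A f) + X (B (X (f : H))) - D (f : H) with hw_def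
  have key : ∀ g : C.adjoint.domain, ⟪C.adjoint g, X (f : H)⟫_ℂ = ⟪(g : K), w⟫_ℂ := by
    intro g
    have h := hw f g
    rw [hw_def]
    rw [inner_sub_right, inner_add_right]
    linear_combination -h
  -- The graph argument
  let e : WithLp 2 (K × K) ≃L[ℂ] K × K := WithLp.prodContinuousLinearEquiv 2 ℂ K K
  let S : Submodule ℂ (WithLp 2 (K × K)) := C.graph.comap (e : WithLp 2 (K × K) →ₗ[ℂ] K × K)
  have hSclosed : IsClosed (S : Set (WithLp 2 (K × K))) := by
    have : (S : Set (WithLp 2 (K × K))) = e ⁻¹' (C.graph : Set (K × K)) := rfl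
    rw [this]
    exact hCc.preimage e.continuous
  haveI : CompleteSpace S := hSclosed.completeSpace_coe
  have horth : Sᗮᗮ = S := Submodule.orthogonal_orthogonal S
  set v : WithLp 2 (K × K) := e.symm (X (f : H), w) with hv_def
  have hev : e v = (X (f : H), w) := e.apply_symm_apply _
  have hvmem : v ∈ Sᗮᗮ := by
    rw [Submodule.mem_orthogonal]
    intro u hu
    rw [Submodule.mem_orthogonal] at hu
    -- u.2 is in the adjoint domain with C† u.2 = -u.1
    have hup : ∀ x : C.domain, ⟪(x : K), (e u).1⟫_ℂ + ⟪C x, (e u).2⟫_ℂ = 0 := by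
      intro x
      have hp : e.symm ((x : K), C x) ∈ S := by
        show e (e.symm ((x : K), C x)) ∈ C.graph
        rw [e.apply_symm_apply]
        exact C.mem_graph x
      have := hu _ hp
      rw [WithLp.prod_inner_apply] at this
      have h1 : (e.symm ((x : K), C x) : WithLp 2 (K × K)).ofLp.1 = (x : K) := by
        rw [show (e.symm ((x : K), C x) : WithLp 2 (K × K)).ofLp.1 = (e (e.symm ((x:K), C x))).1 from rfl,
          e.apply_symm_apply]
      have h2 : (e.symm ((x : K), C x) : WithLp 2 (K × K)).ofLp.2 = C x := by
        rw [show (e.symm ((x : K), C x) : WithLp 2 (K × K)).ofLp.2 = (e (e.symm ((x:K), C x))).2 from rfl,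
          e.apply_symm_apply]
      rw [h1, h2] at this
      have hu1 : u.ofLp.1 = (e u).1 := rfl
      have hu2 : u.ofLp.2 = (e u).2 := rfl
      rw [hu1, hu2] at this
      exact this
    have hconj : ∀ x : C.domain, ⟪-(e u).1, (x : K)⟫_ℂ = ⟪(e u).2, C x⟫_ℂ := by
      intro x
      have := congrArg (starRingEnd ℂ) (hup x)
      simp only [map_add, inner_conj_symm, map_zero] at this
      rw [inner_neg_left]
      linear_combination -this
    have hmem : (e u).2 ∈ C.adjoint.domain :=
      C.mem_adjoint_domain_of_exists _ ⟨-(e u).1, hconj⟩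
    have hadj : C.adjoint ⟨(e u).2, hmem⟩ = -(e u).1 :=
      LinearPMap.adjoint_apply_eq hCd ⟨(e u).2, hmem⟩ hconj
    -- now compute the inner product
    rw [WithLp.prod_inner_apply]
    have hv1 : v.ofLp.1 = X (f : H) := by
      rw [show v.ofLp.1 = (e v).1 from rfl, hev]
    have hv2 : v.ofLp.2 = w := by
      rw [show v.ofLp.2 = (e v).2 from rfl, hev]
    have hu1 : u.ofLp.1 = (e u).1 := rfl
    have hu2 : u.ofLp.2 = (e u).2 := rfl
    rw [hv1, hv2, hu1, hu2]
    have hk := key ⟨(e u).2, hmem⟩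
    rw [hadj] at hk
    rw [inner_neg_left] at hk
    linear_combination -hk
  rw [horth] at hvmem
  have hgraph : (X (f : H), w) ∈ C.graph := by
    have : e v ∈ C.graph := hvmem
    rwa [hev] at this
  rw [LinearPMap.mem_graph_iff] at hgraph
  obtain ⟨y, hy1, hy2⟩ := hgraph
  have hy1' : (y : K) = X (f : H) := hy1
  have hmem : X (f : H) ∈ C.domain := hy1' ▸ y.2
  refine ⟨hmem, ?_⟩
  have : C ⟨X (f : H), hmem⟩ = w := by
    have hyy : y = ⟨X (f : H), hmem⟩ := Subtype.ext hy1'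
    rw [← hyy, hy2]
  rw [this, hw_def]
  abel

end
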